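/- arXiv:2509.08144 — 5 statements merged into one kernel-verified Lean document; each statement's English description precedes it below -/
import Mathlib

section
/- Let M be a matroid with finite ground set in which every pair of flats is a modular pair, and let F be a flat of M. Then every pair of flats of the contraction M / F is a modular pair in M / F; that is, for all flats X, Y of M / F one has (M / F).rk X + (M / F).rk Y = (M / F).rk (X ∪ Y) + (M / F).rk (X ∩ Y). -/
open Matroid Set

/-- The contraction `M / C` of a matroid `M` by a set `C`, defined as the dual of the
restriction of the dual to the complement of `C`. -/
def Matroid.contract' {α : Type*} (M : Matroid α) (C : Set α) : Matroid α :=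
  (M✶ ↾ (M.E \ C))✶

/-- The rank of a set `X` in a matroid `M`: the largest cardinality of an independent
subset of `X`. -/
noncomputable def Matroid.rk {α : Type*} (M : Matroid α) (X : Set α) : ℕ :=
  sSup {n : ℕ | ∃ I, M.Indep I ∧ I ⊆ X ∧ I.ncard = n}

namespace Matroid

variable {α : Type*} {M : Matroid α} {I J X Y F B : Set α} {e : α}

lemma my_flat_closure (M : Matroid α) (X : Set α) : M.IsFlat (M.closure X) := by
  rw [closure_def, sInter_eq_iInter]
  haveI : Nonempty ↑{F | M.IsFlat F ∧ X ∩ M.E ⊆ F} :=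
    ⟨⟨M.E, M.ground_isFlat, inter_subset_right⟩⟩
  exact IsFlat.iInter fun F => F.2.1

lemma rk_eq_ncard_basis' [M.Finite] (hI : M.IsBasis' I X) : M.rk X = I.ncard := by
  have hset : {n : ℕ | ∃ J, M.Indep J ∧ J ⊆ X ∧ J.ncard = n} = Set.Iic I.ncard := by
    ext n
    simp only [Set.mem_setOf_eq, Set.mem_Iic]
    constructor
    · rintro ⟨J, hJ, hJX, rfl⟩
      obtain ⟨I', hI', hJI'⟩ := hJ.subset_isBasis'_of_subset hJX
      have hcard : I'.encard = I.encard := hI'.encard_eq_encard hI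
      have h1 : J.ncard ≤ I'.ncard :=
        Set.ncard_le_ncard hJI' (M.set_finite I' hI'.indep.subset_ground)
      have h2 : I'.ncard = I.ncard := by rw [Set.ncard_def, hcard, ← Set.ncard_def]
      omega
    · intro hn
      obtain ⟨J, hJI, hJcard⟩ := Set.exists_subset_card_eq hn
      exact ⟨J, hI.indep.subset hJI, hJI.trans hI.subset, hJcard⟩
  rw [Matroid.rk, hset, csSup_Iic]

lemma rk_eq_ncard_basis [M.Finite] (hI : M.IsBasis I X) : M.rk X = I.ncard :=
  rk_eq_ncard_basis' hI.isBasis'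

lemma ncard_le_rk [M.Finite] (hJ : M.Indep J) (hJX : J ⊆ X) : J.ncard ≤ M.rk X := by
  obtain ⟨I, hI, hJI⟩ := hJ.subset_isBasis'_of_subset hJX
  rw [rk_eq_ncard_basis' hI]
  exact Set.ncard_le_ncard hJI (M.set_finite I hI.indep.subset_ground)

lemma contract_ground' (M : Matroid α) (C : Set α) : (M.contract' C).E = M.E \ C := rfl

lemma contract'_finite [M.Finite] (C : Set α) : (M.contract' C).Finite := by
  rw [Matroid.contract']
  haveI : (M✶ ↾ (M.E \ C)).Finite := restrict_finite (M.ground_finite.diff (t := C))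
  infer_instance

lemma contract_base_iff (hF : F ⊆ M.E) :
    (M.contract' F).IsBase B ↔
      ∃ B', M.IsBase B' ∧ M.IsBasis (B' ∩ F) F ∧ B = B' ∩ (M.E \ F) := by
  have hRE : M.E \ F ⊆ M.E := diff_subset
  rw [Matroid.contract', dual_isBase_iff', restrict_ground_eq, isBase_restrict_iff',
    isBasis'_iff_isBasis (show M.E \ F ⊆ M✶.E from hRE)]
  constructor
  · rintro ⟨hBasis, hBR⟩
    obtain ⟨D, hD, hEq⟩ := hBasis.exists_isBase
    have hiff := IsBase.inter_isBasis_iff_compl_inter_isBasis_dual hD.compl_isBase_of_dual hF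
    rw [diff_diff_cancel_left (show D ⊆ M.E from hD.subset_ground)] at hiff
    refine ⟨M.E \ D, hD.compl_isBase_of_dual, hiff.mpr (hEq ▸ hBasis), ?_⟩
    have h1 : (M.E \ D) ∩ (M.E \ F) = (M.E \ F) \ (D ∩ (M.E \ F)) := by
      ext x; constructor
      · rintro ⟨⟨hxE, hxD⟩, hxR⟩; exact ⟨hxR, fun h => hxD h.1⟩
      · rintro ⟨hxR, hxD⟩; exact ⟨⟨hRE hxR, fun h => hxD ⟨h, hxR⟩⟩, hxR⟩
    rw [h1, ← hEq, diff_diff_cancel_left hBR]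
  · rintro ⟨B', hB', hBF, rfl⟩
    refine ⟨?_, inter_subset_right⟩
    have hbas := (IsBase.inter_isBasis_iff_compl_inter_isBasis_dual hB' hF).mp hBF
    have h1 : (M.E \ F) \ (B' ∩ (M.E \ F)) = (M.E \ B') ∩ (M.E \ F) := by
      ext x; constructor
      · rintro ⟨hxR, hxB⟩; exact ⟨⟨hRE hxR, fun h => hxB ⟨h, hxR⟩⟩, hxR⟩
      · rintro ⟨⟨_, hxB⟩, hxR⟩; exact ⟨hxR, fun h => hxB h.1⟩
    rw [h1]
    exact hbas

lemma contract_indep_iff (hF : F ⊆ M.E) :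
    (M.contract' F).Indep I ↔
      I ⊆ M.E \ F ∧ ∃ J, M.IsBasis J F ∧ M.Indep (I ∪ J) := by
  constructor
  · intro hI
    obtain ⟨B, hB, hIB⟩ := hI.exists_isBase_superset
    rw [contract_base_iff hF] at hB
    obtain ⟨B', hB', hBF, rfl⟩ := hB
    refine ⟨hIB.trans inter_subset_right, B' ∩ F, hBF, hB'.indep.subset ?_⟩
    exact union_subset (hIB.trans inter_subset_left) inter_subset_left
  · rintro ⟨hIR, J, hJ, hIJ⟩
    obtain ⟨B', hB', hss⟩ := hIJ.exists_isBase_superset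
    have hJB : J ⊆ B' ∩ F := subset_inter (subset_union_right.trans hss) hJ.subset
    have hBF : B' ∩ F = J :=
      (hJ.eq_of_subset_indep (hB'.indep.inter_right F) hJB inter_subset_right).symm
    have hB : (M.contract' F).IsBase (B' ∩ (M.E \ F)) := by
      rw [contract_base_iff hF]
      exact ⟨B', hB', hBF ▸ hJ, rfl⟩
    exact hB.indep.subset (subset_inter (subset_union_left.trans hss) hIR)

lemma contract_basis_union [M.Finite] (hF : F ⊆ M.E) (hXR : X ⊆ M.E \ F)
    (hI : (M.contract' F).IsBasis' I X) (hJ : M.IsBasis J F) (hIJ : M.Indep (I ∪ J)) :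
    M.IsBasis (I ∪ J) (X ∪ F) := by
  have hIX : I ⊆ X := hI.subset
  refine hIJ.isBasis_of_subset_of_subset_closure
    (union_subset_union hIX hJ.subset) ?_
  intro e he
  by_cases heIJ : e ∈ I ∪ J
  · exact M.mem_closure_of_mem heIJ hIJ.subset_ground
  have heE : e ∈ M.E := by
    rcases he with h | h
    · exact (hXR h).1
    · exact hF h
  rw [hIJ.mem_closure_iff]
  left
  rw [dep_iff]
  refine ⟨fun hind => ?_, insert_subset heE hIJ.subset_ground⟩
  rcases he with heX | heF
  · -- e ∈ X, insert e (I ∪ J) indep gives contradiction with maximality of I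
    have heI : e ∉ I := fun h => heIJ (Or.inl h)
    have hind' : (M.contract' F).Indep (insert e I) := by
      rw [contract_indep_iff hF]
      refine ⟨insert_subset (hXR heX) (hIX.trans hXR), J, hJ, ?_⟩
      have : insert e I ∪ J = insert e (I ∪ J) := by rw [insert_union]
      rw [this]; exact hind
    exact heI (hI.mem_of_insert_indep heX hind')
  · have heJ : e ∉ J := fun h => heIJ (Or.inr h)
    have : M.Indep (insert e J) := hind.subset (insert_subset_insert subset_union_right)
    have := hJ.eq_of_subset_indep this (subset_insert _ _)
      (insert_subset heF hJ.subset)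
    exact heJ (this ▸ mem_insert _ _)

lemma contract_rk_add [M.Finite] (hF : F ⊆ M.E) (hXR : X ⊆ M.E \ F) :
    (M.contract' F).rk X + M.rk F = M.rk (X ∪ F) := by
  haveI := contract'_finite (M := M) F
  obtain ⟨I, hI⟩ := (M.contract' F).exists_isBasis' X
  obtain ⟨hIR, J, hJ, hIJ⟩ := (contract_indep_iff hF).mp hI.indep
  have hbas := contract_basis_union hF hXR hI hJ hIJ
  rw [rk_eq_ncard_basis' hI, rk_eq_ncard_basis hJ, rk_eq_ncard_basis hbas]
  have hdisj : Disjoint I J :=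
    Set.disjoint_left.mpr fun x hxI hxJ => (hIR hxI).2 (hJ.subset hxJ)
  rw [Set.ncard_union_eq hdisj (M.set_finite I (hIR.trans diff_subset))
    (M.set_finite J (hJ.subset.trans hF))]

lemma rk_insert_eq_of_mem_closure [M.Finite] (hX : X ⊆ M.E) (he : e ∈ M.closure X) :
    M.rk (insert e X) = M.rk X := by
  obtain ⟨I, hI⟩ := M.exists_isBasis X hX
  have h1 : M.IsBasis I (insert e X) := by
    refine hI.indep.isBasis_of_subset_of_subset_closure (hI.subset.trans (subset_insert _ _)) ?_
    rw [hI.closure_eq_closure]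
    exact insert_subset he (M.subset_closure X hX)
  rw [rk_eq_ncard_basis h1, rk_eq_ncard_basis hI]

lemma mem_closure_of_rk_insert_eq [M.Finite] (hX : X ⊆ M.E) (he : e ∈ M.E)
    (hrk : M.rk (insert e X) = M.rk X) : e ∈ M.closure X := by
  by_contra hec
  obtain ⟨I, hI⟩ := M.exists_isBasis X hX
  have hecI : e ∉ M.closure I := by rwa [hI.closure_eq_closure]
  have hind : M.Indep (insert e I) ∧ e ∉ I := (hI.indep.notMem_closure_iff he).mp hecI
  have hle : (insert e I).ncard ≤ M.rk (insert e X) :=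
    ncard_le_rk hind.1 (insert_subset_insert hI.subset)
  rw [Set.ncard_insert_of_notMem hind.2 (M.set_finite I hI.indep.subset_ground),
    hrk, rk_eq_ncard_basis hI] at hle
  omega

lemma flat_union_of_contract_flat [M.Finite] (hF : M.IsFlat F)
    (hX : (M.contract' F).IsFlat X) : M.IsFlat (X ∪ F) := by
  haveI := contract'_finite (M := M) F
  have hXR : X ⊆ M.E \ F := hX.subset_ground
  have hXE : X ∪ F ⊆ M.E := union_subset (hXR.trans diff_subset) hF.subset_ground
  have hcl : M.closure (X ∪ F) = X ∪ F := by
    refine subset_antisymm ?_ (M.subset_closure _ hXE)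
    intro e he
    have heE : e ∈ M.E := mem_ground_of_mem_closure he
    by_cases heF : e ∈ F
    · exact Or.inr heF
    left
    have heR : e ∈ (M.contract' F).E := by rw [contract_ground']; exact ⟨heE, heF⟩
    have h1 := contract_rk_add (M := M) hF.subset_ground
      (insert_subset heR hXR)
    have h2 := contract_rk_add (M := M) hF.subset_ground hXR
    rw [insert_union, rk_insert_eq_of_mem_closure hXE he] at h1
    have hrk : (M.contract' F).rk (insert e X) = (M.contract' F).rk X := by omega
    have := mem_closure_of_rk_insert_eq (M := M.contract' F)
      (show X ⊆ (M.contract' F).E from hXR) heR hrk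
    rwa [hX.closure] at this
  have := M.my_flat_closure (X ∪ F)
  rwa [hcl] at this

end Matroid

/-- If every pair of flats of a matroid `M` with finite ground set is a modular pair, then
the same holds in the contraction `M / F` by any flat `F` of `M`. -/
theorem modular_contract_flat {α : Type*} (M : Matroid α) [M.Finite]
    (hmod : ∀ X Y : Set α, M.IsFlat X → M.IsFlat Y →
      M.rk X + M.rk Y = M.rk (X ∪ Y) + M.rk (X ∩ Y))
    (F : Set α) (hF : M.IsFlat F) :
    ∀ X Y : Set α, (M.contract' F).IsFlat X → (M.contract' F).IsFlat Y →
      (M.contract' F).rk X + (M.contract' F).rk Y =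
        (M.contract' F).rk (X ∪ Y) + (M.contract' F).rk (X ∩ Y) := by
  intro X Y hX hY
  have hFE := hF.subset_ground
  have hXR : X ⊆ M.E \ F := hX.subset_ground
  have hYR : Y ⊆ M.E \ F := hY.subset_ground
  have hXf := M.flat_union_of_contract_flat hF hX
  have hYf := M.flat_union_of_contract_flat hF hY
  have key := hmod (X ∪ F) (Y ∪ F) hXf hYf
  have hu : (X ∪ F) ∪ (Y ∪ F) = (X ∪ Y) ∪ F := by
    ext x; simp only [Set.mem_union]; tauto
  have hi : (X ∪ F) ∩ (Y ∪ F) = (X ∩ Y) ∪ F := by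
    ext x; simp only [Set.mem_union, Set.mem_inter_iff]; tauto
  rw [hu, hi] at key
  have e1 := Matroid.contract_rk_add (M := M) hFE hXR
  have e2 := Matroid.contract_rk_add (M := M) hFE hYR
  have e3 := Matroid.contract_rk_add (M := M) hFE (Set.union_subset hXR hYR)
  have e4 := Matroid.contract_rk_add (M := M) hFE
    (show X ∩ Y ⊆ M.E \ F from Set.inter_subset_left.trans hXR)
  omega
end

section
/- Let K be a field, n a finite type with decidable equality, and A : Matrix n n K a submonomial matrix (every row and every column contains at most one nonzero entry) that is invertible (IsUnit A.det). Then for all indices i, j the inverse satisfies A⁻¹ i j = (A j i)⁻¹ if A j i ≠ 0 and A⁻¹ i j = 0 otherwise; in particular A⁻¹ is again submonomial. -/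
/-- A matrix is submonomial if every row and every column contains at most one nonzero
entry. -/
def Matrix.Submonomial {l m R : Type*} [Zero R] (A : Matrix l m R) : Prop :=
  (∀ i j j', A i j ≠ 0 → A i j' ≠ 0 → j = j') ∧
  (∀ i i' j, A i j ≠ 0 → A i' j ≠ 0 → i = i')

/-- The inverse of an invertible submonomial matrix over a field has entries
`A⁻¹ i j = (A j i)⁻¹` when `A j i ≠ 0` and `A⁻¹ i j = 0` otherwise; in particular the
inverse is again submonomial. -/
theorem Matrix.Submonomial.inv {K n : Type*} [Field K] [Fintype n] [DecidableEq n]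
    (A : Matrix n n K) (hA : A.Submonomial) (h : IsUnit A.det) :
    (∀ i j, (A j i ≠ 0 → A⁻¹ i j = (A j i)⁻¹) ∧ (A j i = 0 → A⁻¹ i j = 0)) ∧
      A⁻¹.Submonomial := by
  classical
  have hdet : A.det ≠ 0 := by
    intro h0
    rw [h0] at h
    exact (not_isUnit_zero h)
  set B : Matrix n n K := Matrix.of fun i j => if A j i = 0 then 0 else (A j i)⁻¹ with hBdef
  have hrow : ∀ i, ∃ k, A i k ≠ 0 := by
    intro i
    by_contra hc
    push_neg at hc
    exact hdet (Matrix.det_eq_zero_of_row_eq_zero i hc)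
  have hAB : A * B = 1 := by
    ext i j
    rw [Matrix.mul_apply]
    obtain ⟨k0, hk0⟩ := hrow i
    by_cases hij : i = j
    · subst hij
      rw [Matrix.one_apply_eq]
      rw [Finset.sum_eq_single k0]
      · simp [hBdef, hk0, mul_inv_cancel₀ hk0]
      · intro k _ hk
        have : A i k = 0 := by
          by_contra hk'
          exact hk (hA.1 i k k0 hk' hk0)
        simp [hBdef, this]
      · simp
    · rw [Matrix.one_apply_ne hij]
      apply Finset.sum_eq_zero
      intro k _
      by_cases h1 : A i k = 0
      · simp [h1]
      by_cases h2 : A j k = 0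
      · simp [hBdef, h2]
      · exact absurd (hA.2 i j k h1 h2) hij
  have hinv : A⁻¹ = B := Matrix.inv_eq_right_inv hAB
  constructor
  · intro i j
    constructor
    · intro hne; simp [hinv, hBdef, hne]
    · intro hz; simp [hinv, hBdef, hz]
  · constructor
    · intro i j j' hj hj'
      rw [hinv] at hj hj'
      simp only [hBdef, Matrix.of_apply, ne_eq, ite_eq_left_iff, not_forall] at hj hj'
      exact hA.2 j j' i hj.1 hj'.1
    · intro i i' j hi hi'
      rw [hinv] at hi hi'
      simp only [hBdef, Matrix.of_apply, ne_eq, ite_eq_left_iff, not_forall] at hi hi'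
      exact hA.1 j i i' hi.1 hi'.1
end

section
/- Let n : ℕ, let ι be a type, and let v : ι → (Fin n → ℤ) be a family of vectors such that for every nonzero m : Fin n → ℤ there exists ρ : ι with 0 < ∑ i, m i * v ρ i. Let α be a partial order and let F : ι → ℤ → α be a family of antitone functions, each of which is non-constant (for each ρ there exist j, k with F ρ j ≠ F ρ k). If m : Fin n → ℤ satisfies F ρ j ≤ F ρ (j + ∑ i, m i * v ρ i) for all ρ : ι and all j : ℤ, then m = 0. -/
/-- If the vectors `v ρ` positively span (every nonzero `m` pairs positively with some
`v ρ`), and `F ρ : ℤ → α` is a family of antitone non-constant functions such that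
`F ρ j ≤ F ρ (j + m · v ρ)` for all `ρ` and `j`, then `m = 0`. -/
theorem eq_zero_of_le_shift {n : ℕ} {ι : Type*} (v : ι → Fin n → ℤ)
    (hv : ∀ m : Fin n → ℤ, m ≠ 0 → ∃ ρ : ι, 0 < ∑ i, m i * v ρ i)
    {α : Type*} [PartialOrder α] (F : ι → ℤ → α)
    (hanti : ∀ ρ, Antitone (F ρ))
    (hnc : ∀ ρ, ∃ j k : ℤ, F ρ j ≠ F ρ k)
    (m : Fin n → ℤ)
    (hm : ∀ (ρ : ι) (j : ℤ), F ρ j ≤ F ρ (j + ∑ i, m i * v ρ i)) :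
    m = 0 := by
  by_contra hne
  obtain ⟨ρ, hc⟩ := hv m hne
  set c := ∑ i, m i * v ρ i with hcdef
  -- F ρ j = F ρ (j + c) for all j
  have heq : ∀ j : ℤ, F ρ j = F ρ (j + c) := fun j =>
    le_antisymm (hm ρ j) (hanti ρ (by linarith))
  have hiter : ∀ (t : ℕ) (j : ℤ), F ρ j = F ρ (j + t * c) := by
    intro t
    induction t with
    | zero => simp
    | succ t ih =>
      intro j
      rw [ih j, heq (j + t * c)]
      congr 1; push_cast; ring
  -- F constant
  obtain ⟨j, k, hjk⟩ := hnc ρ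
  apply hjk
  wlog hle : j ≤ k generalizing j k
  · exact (this k j (Ne.symm hjk) (le_of_not_ge hle)).symm
  have hck : j + ((k - j).toNat : ℤ) * c ≥ k := by
    have : ((k - j).toNat : ℤ) = k - j := Int.toNat_of_nonneg (by linarith)
    nlinarith
  have h1 := hiter (k - j).toNat j
  exact le_antisymm (h1 ▸ hanti ρ hck) (hanti ρ hle)
end

section
/- Let r a : ℤ and let f : ℤ → ℤ be such that there exists N : ℕ with f j = r for all j ≤ -(N : ℤ) and f j = 0 for all j ≥ (N : ℤ). Then the functions j ↦ j * (f j - f (j+1)) and j ↦ j * (f (j - a) - f (j - a + 1)) have finite support, and ∑ᶠ (j : ℤ), j * (f (j - a) - f (j - a + 1)) = (∑ᶠ (j : ℤ), j * (f j - f (j + 1))) + a * r. -/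
private lemma tele_sum (f : ℤ → ℤ) (a : ℤ) :
    ∀ b : ℤ, a ≤ b → ∑ k ∈ Finset.Icc a b, (f k - f (k + 1)) = f a - f (b + 1) := by
  refine Int.le_induction ?_ ?_
  · simp
  · intro n hn ih
    have hins : Finset.Icc a (n + 1) = insert (n + 1) (Finset.Icc a n) := by
      ext x; simp only [Finset.mem_Icc, Finset.mem_insert]; omega
    have hnot : (n + 1) ∉ Finset.Icc a n := by simp
    rw [hins, Finset.sum_insert hnot, ih]; ring

/-- For `f : ℤ → ℤ` eventually equal to `r` at `-∞` and to `0` at `+∞`, the degree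
`∑ᶠ j, j * (f j - f (j+1))` is well-defined (finite support), and shifting by `a`
changes the degree by `a * r`. -/
theorem degree_shift (r a : ℤ) (f : ℤ → ℤ)
    (hf : ∃ N : ℕ, (∀ j : ℤ, j ≤ -(N : ℤ) → f j = r) ∧ (∀ j : ℤ, (N : ℤ) ≤ j → f j = 0)) :
    (Function.support fun j : ℤ => j * (f j - f (j + 1))).Finite ∧
    (Function.support fun j : ℤ => j * (f (j - a) - f (j - a + 1))).Finite ∧
    ∑ᶠ j : ℤ, j * (f (j - a) - f (j - a + 1)) =
      (∑ᶠ j : ℤ, j * (f j - f (j + 1))) + a * r := by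
  obtain ⟨N, hneg, hpos⟩ := hf
  -- the difference function has support in Icc (-N) N
  have hd : ∀ k : ℤ, k ∉ Finset.Icc (-(N : ℤ)) N → f k - f (k + 1) = 0 := by
    intro k hk
    simp only [Finset.mem_Icc, not_and_or, not_le] at hk
    rcases hk with hk | hk
    · rw [hneg k (by omega), hneg (k + 1) (by omega), sub_self]
    · rw [hpos k (by omega), hpos (k + 1) (by omega), sub_self]
  have hdsupp : (Function.support fun k : ℤ => f k - f (k + 1)) ⊆
      (Finset.Icc (-(N : ℤ)) N : Finset ℤ) := by
    intro k hk
    by_contra h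
    exact hk (hd k h)
  have hsupp1 : (Function.support fun j : ℤ => j * (f j - f (j + 1))) ⊆
      (Finset.Icc (-(N : ℤ)) N : Finset ℤ) := by
    intro k hk
    apply hdsupp
    intro h
    exact hk (mul_eq_zero_of_right _ h)
  have hsupp1' : (Function.support fun j : ℤ => j * (f j - f (j + 1))).Finite :=
    Set.Finite.subset (Finset.Icc (-(N : ℤ)) N).finite_toSet hsupp1
  have hsupp2 : (Function.support fun j : ℤ => j * (f (j - a) - f (j - a + 1))) ⊆
      (Finset.Icc (-(N : ℤ) + a) (N + a) : Finset ℤ) := by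
    intro k hk
    simp only [Function.mem_support] at hk
    have : f (k - a) - f (k - a + 1) ≠ 0 := fun h => hk (by rw [h, mul_zero])
    have := hdsupp this
    simp only [Finset.coe_Icc, Set.mem_Icc] at this ⊢
    omega
  have hsupp2' : (Function.support fun j : ℤ => j * (f (j - a) - f (j - a + 1))).Finite :=
    Set.Finite.subset (Finset.Icc (-(N : ℤ) + a) (N + a)).finite_toSet hsupp2
  refine ⟨hsupp1', hsupp2', ?_⟩
  -- telescoping: total sum of differences is r
  have hdfin : (Function.support fun k : ℤ => f k - f (k + 1)).Finite :=
    Set.Finite.subset (Finset.Icc (-(N : ℤ)) N).finite_toSet hdsupp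
  have htel : ∑ᶠ k : ℤ, (f k - f (k + 1)) = r := by
    rw [finsum_eq_sum_of_support_subset _ hdsupp,
      tele_sum f (-(N : ℤ)) N (by omega),
      hneg _ le_rfl, hpos _ (by omega), sub_zero]
  -- change of variables in the shifted sum
  have hcomp : ∑ᶠ j : ℤ, j * (f (j - a) - f (j - a + 1)) =
      ∑ᶠ k : ℤ, (k + a) * (f k - f (k + 1)) := by
    rw [← finsum_comp_equiv (Equiv.addRight a)
      (f := fun j : ℤ => j * (f (j - a) - f (j - a + 1)))]
    simp [Equiv.coe_addRight, add_sub_cancel_right]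
  rw [hcomp]
  have hsplit : ∀ k : ℤ, (k + a) * (f k - f (k + 1)) =
      k * (f k - f (k + 1)) + a * (f k - f (k + 1)) := fun k => by ring
  simp only [hsplit]
  rw [finsum_add_distrib hsupp1' ?_]
  · rw [← mul_finsum _ a, htel]
  · apply Set.Finite.subset hdfin
    intro k hk
    exact fun h => hk (mul_eq_zero_of_right _ h)
end

section
/- Let M be a matroid with finite ground set, let F be a flat of M, and let (F_j)_{j ∈ ℤ} be a family of flats of M that is antitone (F_k ⊆ F_j whenever j ≤ k) and such that there exists N : ℕ with F_j = M.E for all j ≤ -(N : ℤ) and F_j = M.closure ∅ for all j ≥ (N : ℤ). Assume that for every j the pair (F, F_j) is modular: M.rk F + M.rk (F_j) = M.rk (F ∪ F_j) + M.rk (F ∩ F_j). Then ∑ᶠ (j : ℤ), j * ((M.rk (F ∩ F_j) : ℤ) - (M.rk (F ∩ F_{j+1}) : ℤ)) + ∑ᶠ (j : ℤ), j * ((M.rk (F ∪ F_j) : ℤ) - (M.rk (F ∪ F_{j+1}) : ℤ)) = ∑ᶠ (j : ℤ), j * ((M.rk (F_j) : ℤ) - (M.rk (F_{j+1}) : ℤ)).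 -/
open Matroid

/-- Degree additivity `deg(E|F) + deg(E/F) = deg(E)` for a chain of flats `Fl`, each of
which forms a modular pair with the flat `F`. -/
theorem degree_additivity_modular {α : Type*} (M : Matroid α) [M.Finite]
    (F : Set α) (hF : M.IsFlat F)
    (Fl : ℤ → Set α) (hflat : ∀ j : ℤ, M.IsFlat (Fl j))
    (hanti : ∀ j k : ℤ, j ≤ k → Fl k ⊆ Fl j)
    (hbd : ∃ N : ℕ, (∀ j : ℤ, j ≤ -(N : ℤ) → Fl j = M.E) ∧
      (∀ j : ℤ, (N : ℤ) ≤ j → Fl j = M.closure ∅))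
    (hmod : ∀ j : ℤ, M.rk F + M.rk (Fl j) = M.rk (F ∪ Fl j) + M.rk (F ∩ Fl j)) :
    (∑ᶠ j : ℤ, j * ((M.rk (F ∩ Fl j) : ℤ) - (M.rk (F ∩ Fl (j + 1)) : ℤ))) +
      (∑ᶠ j : ℤ, j * ((M.rk (F ∪ Fl j) : ℤ) - (M.rk (F ∪ Fl (j + 1)) : ℤ))) =
      ∑ᶠ j : ℤ, j * ((M.rk (Fl j) : ℤ) - (M.rk (Fl (j + 1)) : ℤ)) := by
  obtain ⟨N, hE, h0⟩ := hbd
  have hfin : ∀ (r : Set α → ℤ),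
      (Function.support fun j : ℤ => j * (r (Fl j) - r (Fl (j + 1)))).Finite := by
    intro r
    apply Set.Finite.subset (Set.finite_Icc (-(N : ℤ) - 1) N)
    intro j hj
    simp only [Function.mem_support] at hj
    rw [Set.mem_Icc]
    constructor
    · by_contra h
      push_neg at h
      rw [hE j (by omega), hE (j + 1) (by omega)] at hj
      simp at hj
    · by_contra h
      push_neg at h
      rw [h0 j (by omega), h0 (j + 1) (by omega)] at hj
      simp at hj
  rw [← finsum_add_distrib (hfin fun S => (M.rk (F ∩ S) : ℤ))
    (hfin fun S => (M.rk (F ∪ S) : ℤ))]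
  apply finsum_congr
  intro j
  have e1 : ((M.rk (F ∪ Fl j) : ℤ) + (M.rk (F ∩ Fl j) : ℤ)) =
      (M.rk F : ℤ) + (M.rk (Fl j) : ℤ) := by exact_mod_cast (hmod j).symm
  have e2 : ((M.rk (F ∪ Fl (j + 1)) : ℤ) + (M.rk (F ∩ Fl (j + 1)) : ℤ)) =
      (M.rk F : ℤ) + (M.rk (Fl (j + 1)) : ℤ) := by exact_mod_cast (hmod (j + 1)).symm
  linear_combination j * e1 - j * e2
end
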